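/- Let 𝔤 be a finite-dimensional simple real Lie algebra equipped with an inner product ⟨·,·⟩, and let k be a nonzero real number. Then for every linear functional α : 𝔤 → ℝ there exists a unique element v ∈ 𝔤 such that α([x,y]) = k·⟨v,[x,y]⟩ for all x,y ∈ 𝔤; moreover this unique v satisfies α(x) = k·⟨v,x⟩ for all x ∈ 𝔤 whenever α is of that form. -/
import Mathlib

section Aux

variable {L : Type*} [LieRing L] [LieAlgebra ℝ L] [FiniteDimensional ℝ L]
    [LieAlgebra.IsSimple ℝ L]

lemma aux_derived_top : (⁅(⊤ : LieIdeal ℝ L), (⊤ : LieIdeal ℝ L)⁆ : LieIdeal ℝ L) = ⊤ := by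
  rcases LieAlgebra.IsSimple.eq_bot_or_eq_top (⁅(⊤ : LieIdeal ℝ L), (⊤ : LieIdeal ℝ L)⁆) with h | h
  · exfalso
    apply LieAlgebra.IsSimple.non_abelian ℝ (L := L)
    constructor
    intro x y
    have : ⁅x, y⁆ ∈ (⁅(⊤ : LieIdeal ℝ L), (⊤ : LieIdeal ℝ L)⁆ : LieIdeal ℝ L) :=
      LieSubmodule.lie_mem_lie (LieSubmodule.mem_top _) (LieSubmodule.mem_top _)
    rw [h] at this
    exact this
  · exact h

lemma aux_vanish (B : L →ₗ[ℝ] L →ₗ[ℝ] ℝ)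
    (hposdef : ∀ x : L, x ≠ 0 → 0 < B x x)
    (w : L) (hw : ∀ x y : L, B w ⁅x, y⁆ = 0) : w = 0 := by
  have hker : ∀ z : L, B w z = 0 := by
    intro z
    have hz : z ∈ (⁅(⊤ : LieIdeal ℝ L), (⊤ : LieIdeal ℝ L)⁆ : LieIdeal ℝ L) := by
      rw [aux_derived_top]; trivial
    rw [← LieSubmodule.mem_toSubmodule, LieSubmodule.lieIdeal_oper_eq_linear_span] at hz
    refine Submodule.span_induction ?_ ?_ ?_ ?_ hz
    · rintro _ ⟨⟨x, -⟩, ⟨y, -⟩, rfl⟩; exact hw x y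
    · simp
    · intro a b _ _ ha hb; rw [map_add, ha, hb, add_zero]
    · intro c a _ ha; rw [map_smul, ha, smul_zero]
  by_contra h
  exact absurd (hker w) (ne_of_gt (hposdef w h))

end Aux

/-- For a finite-dimensional simple real Lie algebra `L` with inner
product `B` and `k ≠ 0`: every linear functional `α` admits a unique `v ∈ L` with
`α([x,y]) = k·⟨v,[x,y]⟩` for all `x, y`; moreover this unique `v` satisfies
`α(x) = k·⟨v,x⟩` for all `x` whenever `α` is of the form `k·⟨w,·⟩` for some `w`. -/
theorem unique_hamiltonian_vector_field
    {L : Type*} [LieRing L] [LieAlgebra ℝ L] [FiniteDimensional ℝ L]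
    [LieAlgebra.IsSimple ℝ L]
    (B : L →ₗ[ℝ] L →ₗ[ℝ] ℝ)
    (hsymm : ∀ x y : L, B x y = B y x)
    (hposdef : ∀ x : L, x ≠ 0 → 0 < B x x)
    (k : ℝ) (hk : k ≠ 0) :
    ∀ α : L →ₗ[ℝ] ℝ,
      (∃! v : L, ∀ x y : L, α ⁅x, y⁆ = k * B v ⁅x, y⁆) ∧
      (∀ v : L, (∀ x y : L, α ⁅x, y⁆ = k * B v ⁅x, y⁆) →
        (∃ w : L, ∀ x : L, α x = k * B w x) →
        ∀ x : L, α x = k * B v x) := by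
  -- B is injective as a map to the dual, hence surjective
  have hinj : Function.Injective B := by
    rw [← LinearMap.ker_eq_bot, Submodule.eq_bot_iff]
    intro w hw
    by_contra h
    have : B w w = 0 := by
      have : B w = 0 := hw
      rw [this]; rfl
    exact absurd this (ne_of_gt (hposdef w h))
  have hsurj : Function.Surjective B :=
    (LinearMap.injective_iff_surjective_of_finrank_eq_finrank
      Subspace.dual_finrank_eq.symm).mp hinj
  -- key uniqueness-on-brackets lemma
  have huniq : ∀ v v' : L, (∀ x y : L, B v ⁅x, y⁆ = B v' ⁅x, y⁆) → v = v' := by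
    intro v v' h
    have : v - v' = 0 := by
      apply aux_vanish B hposdef
      intro x y
      rw [map_sub, LinearMap.sub_apply, h, sub_self]
    exact sub_eq_zero.mp this
  intro α
  obtain ⟨w, hw⟩ := hsurj (k⁻¹ • α)
  have hwα : ∀ x : L, α x = k * B w x := by
    intro x
    have := congrArg (fun f => f x) hw
    simp only [LinearMap.smul_apply, smul_eq_mul] at this
    rw [this]; field_simp
  constructor
  · refine ⟨w, fun x y => hwα _, ?_⟩
    intro v hv
    apply huniq
    intro x y
    have h1 := hv x y
    have h2 := hwα ⁅x, y⁆
    have : k * B v ⁅x, y⁆ = k * B w ⁅x, y⁆ := by rw [← h1, h2]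
    exact mul_left_cancel₀ hk this
  · rintro v hv ⟨w', hw'⟩ x
    have hvw' : v = w' := by
      apply huniq
      intro a b
      have := (hv a b).symm.trans (hw' ⁅a, b⁆)
      exact mul_left_cancel₀ hk this
    rw [hvw']
    exact hw' x
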